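/- For real x with |x| < 1, ∫₀^π θ sin θ / (1 − x² cos² θ) dθ = (π/(2x)) · log((1+x)/(1−x)), i.e. equals (π/x) · artanh(x) (for x ≠ 0). -/

import Mathlib

theorem stmt_5 (x : ℝ) (hx : |x| < 1) (hx0 : x ≠ 0) :
    ∫ θ in (0:ℝ)..Real.pi, θ * Real.sin θ / (1 - x ^ 2 * Real.cos θ ^ 2)
      = Real.pi / (2 * x) * Real.log ((1 + x) / (1 - x)) := by
  have hx2 : x ^ 2 < 1 := by nlinarith [sq_abs x, abs_nonneg x]
  have hden : ∀ θ : ℝ, 0 < 1 - x ^ 2 * Real.cos θ ^ 2 := fun θ => by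
    nlinarith [Real.cos_sq_le_one θ, sq_nonneg x, sq_nonneg (Real.cos θ)]
  have habs : ∀ θ : ℝ, |x * Real.cos θ| < 1 := fun θ => by
    calc |x * Real.cos θ| = |x| * |Real.cos θ| := abs_mul _ _
      _ ≤ |x| * 1 := by gcongr; exact Real.abs_cos_le_one θ
      _ < 1 := by simpa using hx
  have hp : ∀ θ : ℝ, 0 < 1 + x * Real.cos θ := fun θ => by
    have := abs_lt.mp (habs θ); linarith [this.1]
  have hm : ∀ θ : ℝ, 0 < 1 - x * Real.cos θ := fun θ => by
    have := abs_lt.mp (habs θ); linarith [this.2]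
  set f : ℝ → ℝ := fun θ => θ * Real.sin θ / (1 - x ^ 2 * Real.cos θ ^ 2) with hf
  have hcontf : Continuous f := by
    apply Continuous.div (by continuity) (by continuity)
    exact fun θ => (hden θ).ne'
  have hsymm : ∫ θ in (0:ℝ)..Real.pi, f (Real.pi - θ)
      = ∫ θ in (0:ℝ)..Real.pi, f θ := by
    rw [intervalIntegral.integral_comp_sub_left f Real.pi]
    simp
  have hg : (∫ θ in (0:ℝ)..Real.pi, Real.sin θ / (1 - x ^ 2 * Real.cos θ ^ 2))
      = 1 / x * Real.log ((1 + x) / (1 - x)) := by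
    have hFT := intervalIntegral.integral_eq_sub_of_hasDerivAt
      (f := fun θ : ℝ => -(1 / (2 * x)) *
        (Real.log (1 + x * Real.cos θ) - Real.log (1 - x * Real.cos θ)))
      (f' := fun θ : ℝ => Real.sin θ / (1 - x ^ 2 * Real.cos θ ^ 2))
      (a := 0) (b := Real.pi) ?_ ?_
    · rw [hFT]
      have h1 : (0:ℝ) < 1 + x := by have := hp 0; simpa using this
      have h2 : (0:ℝ) < 1 - x := by have := hm 0; simpa using this
      rw [Real.log_div h1.ne' h2.ne']
      simp only [Real.cos_pi, Real.cos_zero]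
      have e1 : 1 + x * (-1 : ℝ) = 1 - x := by ring
      have e2 : 1 - x * (-1 : ℝ) = 1 + x := by ring
      have e3 : 1 + x * (1 : ℝ) = 1 + x := by ring
      have e4 : 1 - x * (1 : ℝ) = 1 - x := by ring
      rw [e1, e2, e3, e4]
      field_simp
      ring
    · intro θ _
      have hc : HasDerivAt Real.cos (-Real.sin θ) θ := Real.hasDerivAt_cos θ
      have h1 : HasDerivAt (fun t => 1 + x * Real.cos t) (x * (-Real.sin θ)) θ :=
        (hc.const_mul x).const_add 1
      have h2 : HasDerivAt (fun t => 1 - x * Real.cos t) (-(x * (-Real.sin θ))) θ :=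
        (hc.const_mul x).const_sub 1
      have hl1 := h1.log (hp θ).ne'
      have hl2 := h2.log (hm θ).ne'
      have hD := (hl1.sub hl2).const_mul (-(1 / (2 * x)))
      convert hD using 1
      · rfl
      · rfl
      have d1 := (hp θ).ne'
      have d2 := (hm θ).ne'
      have d3 := (hden θ).ne'
      field_simp
      ring
    · exact (Continuous.div (by continuity) (by continuity)
        fun θ => (hden θ).ne').intervalIntegrable _ _
  have hint1 : IntervalIntegrable f MeasureTheory.volume 0 Real.pi :=
    hcontf.intervalIntegrable _ _
  have hint2 : IntervalIntegrable (fun θ => f (Real.pi - θ)) MeasureTheory.volume 0 Real.pi :=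
    (hcontf.comp (by continuity)).intervalIntegrable _ _
  have key : (2:ℝ) * ∫ θ in (0:ℝ)..Real.pi, f θ
      = Real.pi * ∫ θ in (0:ℝ)..Real.pi, Real.sin θ / (1 - x ^ 2 * Real.cos θ ^ 2) := by
    calc (2:ℝ) * ∫ θ in (0:ℝ)..Real.pi, f θ
        = (∫ θ in (0:ℝ)..Real.pi, f θ) + ∫ θ in (0:ℝ)..Real.pi, f (Real.pi - θ) := by
          rw [hsymm]; ring
      _ = ∫ θ in (0:ℝ)..Real.pi, (f θ + f (Real.pi - θ)) :=
          (intervalIntegral.integral_add hint1 hint2).symm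
      _ = ∫ θ in (0:ℝ)..Real.pi,
            Real.pi * (Real.sin θ / (1 - x ^ 2 * Real.cos θ ^ 2)) := by
          apply intervalIntegral.integral_congr
          intro θ _
          simp only [hf]
          rw [Real.sin_pi_sub, Real.cos_pi_sub]
          have hd := (hden θ).ne'
          have : Real.cos θ ^ 2 = (-Real.cos θ) ^ 2 := by ring
          field_simp
          ring
      _ = Real.pi * ∫ θ in (0:ℝ)..Real.pi, Real.sin θ / (1 - x ^ 2 * Real.cos θ ^ 2) :=
          intervalIntegral.integral_const_mul _ _
  rw [hg] at key
  have : (∫ θ in (0:ℝ)..Real.pi, f θ)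
      = Real.pi * (1 / x * Real.log ((1 + x) / (1 - x))) / 2 := by linarith
  rw [show (∫ θ in (0:ℝ)..Real.pi, θ * Real.sin θ / (1 - x ^ 2 * Real.cos θ ^ 2))
      = ∫ θ in (0:ℝ)..Real.pi, f θ from rfl, this]
  ring
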